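/- Let ω > 0, T > 0, c > 0 and (x₀, ẋ₀) ∈ ℝ². If |x₀| < c and |A₁₁x₀ + A₁₂ẋ₀| < c (i.e. (x₀, ẋ₀) lies in the safe region S = S₀ ∩ S_T), then |A₂₁x₀ + A₂₂ẋ₀| < ((A₁₁ + 1)/A₁₂)·c. -/

import Mathlib

/-- if `(x₀,v₀)` lies in the safe region (`|x₀| < c` and
`|A₁₁x₀ + A₁₂v₀| < c`), then `|A₂₁x₀ + A₂₂v₀| < ((A₁₁+1)/A₁₂)·c`. -/
theorem stmt12 (ω T c x₀ v₀ : ℝ) (hω : 0 < ω) (hT : 0 < T) (hc : 0 < c)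
    (A11 A12 A21 A22 : ℝ)
    (hA11 : A11 = Real.cosh (ω * T)) (hA12 : A12 = Real.sinh (ω * T) / ω)
    (hA21 : A21 = ω * Real.sinh (ω * T)) (hA22 : A22 = Real.cosh (ω * T))
    (hS0 : |x₀| < c) (hST : |A11 * x₀ + A12 * v₀| < c) :
    |A21 * x₀ + A22 * v₀| < ((A11 + 1) / A12) * c := by
  have hs : 0 < Real.sinh (ω * T) := Real.sinh_pos_iff.2 (by positivity)
  have hch : 1 ≤ Real.cosh (ω * T) := Real.one_le_cosh _
  have h1 : Real.cosh (ω * T) ^ 2 - Real.sinh (ω * T) ^ 2 = 1 :=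
    Real.cosh_sq_sub_sinh_sq _
  have hA12pos : 0 < A12 := by rw [hA12]; positivity
  have key : A21 * x₀ + A22 * v₀ =
      (A22 / A12) * (A11 * x₀ + A12 * v₀) - (1 / A12) * x₀ := by
    subst hA11 hA12 hA21 hA22
    field_simp
    linear_combination (-1 * ω * x₀) * h1
  rw [key]
  have hA22pos : 0 < A22 := by rw [hA22]; linarith
  have h2 : |(A22 / A12) * (A11 * x₀ + A12 * v₀) - (1 / A12) * x₀| ≤
      (A22 / A12) * |A11 * x₀ + A12 * v₀| + (1 / A12) * |x₀| := by
    calc |(A22 / A12) * (A11 * x₀ + A12 * v₀) - (1 / A12) * x₀|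
        ≤ |(A22 / A12) * (A11 * x₀ + A12 * v₀)| + |(1 / A12) * x₀| :=
          abs_sub _ _
      _ = (A22 / A12) * |A11 * x₀ + A12 * v₀| + (1 / A12) * |x₀| := by
          rw [abs_mul, abs_mul, abs_of_pos (by positivity : (0:ℝ) < A22 / A12),
            abs_of_pos (by positivity : (0:ℝ) < 1 / A12)]

  have h3 : (A22 / A12) * |A11 * x₀ + A12 * v₀| + (1 / A12) * |x₀| <
      ((A11 + 1) / A12) * c := by
    have : A11 = A22 := by rw [hA11, hA22]
    rw [this] at hST ⊢
    have e : ((A22 + 1) / A12) * c = (A22 / A12) * c + (1 / A12) * c := by ring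
    rw [e]
    have := mul_lt_mul_of_pos_left hST (by positivity : (0:ℝ) < A22 / A12)
    have := mul_lt_mul_of_pos_left hS0 (by positivity : (0:ℝ) < 1 / A12)
    linarith
  linarith [h2, h3]
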